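/- For any natural number n ≥ 1 and real numbers a₁, …, aₙ with each aᵢ ∈ [0,1], the gap between the average of exponentials and the exponential of the average satisfies (1/n)·∑ᵢ exp(aᵢ) − exp((1/n)·∑ᵢ aᵢ) ≤ (e−1)·log(e−1) + 2 − e. -/

import Mathlib

open Real Finset

theorem stmt_0 (n : ℕ) (hn : 1 ≤ n) (a : Fin n → ℝ)
    (ha : ∀ i, a i ∈ Set.Icc (0 : ℝ) 1) :
    (1 / (n : ℝ)) * ∑ i, Real.exp (a i) - Real.exp ((1 / (n : ℝ)) * ∑ i, a i)
      ≤ (Real.exp 1 - 1) * Real.log (Real.exp 1 - 1) + 2 - Real.exp 1 := by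
  have hn' : (0:ℝ) < n := by exact_mod_cast hn
  have he : (2:ℝ) ≤ Real.exp 1 := by linarith [Real.add_one_le_exp (1:ℝ)]
  have chord : ∀ x ∈ Set.Icc (0:ℝ) 1, Real.exp x ≤ 1 + (Real.exp 1 - 1) * x := by
    intro x hx
    have h := convexOn_exp.2 (Set.mem_univ (0:ℝ)) (Set.mem_univ (1:ℝ))
      (show (0:ℝ) ≤ 1 - x by linarith [hx.2]) hx.1 (by ring)
    simp only [smul_eq_mul, mul_zero, mul_one, zero_add, Real.exp_zero] at h
    linarith
  set L := Real.log (Real.exp 1 - 1) with hL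
  have hexpL : Real.exp L = Real.exp 1 - 1 := Real.exp_log (by linarith)
  set S := ∑ i, a i with hS
  set m := (1 / (n : ℝ)) * S with hm
  have hsum : ∑ i, Real.exp (a i) ≤ (n : ℝ) + (Real.exp 1 - 1) * S := by
    calc ∑ i, Real.exp (a i) ≤ ∑ i, (1 + (Real.exp 1 - 1) * a i) :=
          Finset.sum_le_sum fun i _ => chord _ (ha i)
      _ = (n : ℝ) + (Real.exp 1 - 1) * S := by
          rw [Finset.sum_add_distrib, Finset.sum_const, ← Finset.mul_sum]
          simp [hS]
  have havg : (1 / (n : ℝ)) * ∑ i, Real.exp (a i) ≤ 1 + (Real.exp 1 - 1) * m := by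
    have := mul_le_mul_of_nonneg_left hsum (le_of_lt (one_div_pos.mpr hn'))
    calc (1 / (n : ℝ)) * ∑ i, Real.exp (a i)
        ≤ (1 / (n : ℝ)) * ((n : ℝ) + (Real.exp 1 - 1) * S) := this
      _ = 1 + (Real.exp 1 - 1) * m := by field_simp [hm]; rw [hm]; field_simp
  have htan : (Real.exp 1 - 1) * (m - L + 1) ≤ Real.exp m := by
    have h1 := Real.add_one_le_exp (m - L)
    have h2 : Real.exp L * (m - L + 1) ≤ Real.exp L * Real.exp (m - L) :=
      mul_le_mul_of_nonneg_left (by linarith) (le_of_lt (Real.exp_pos L))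
    rw [← Real.exp_add] at h2
    have : L + (m - L) = m := by ring
    rw [this] at h2
    linarith [hexpL ▸ h2]
  nlinarith [Real.exp_pos m]
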